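/- Let {(X_n,Y_n)}_{n=1}^∞ be a sequence of independent and identically distributed random pairs, each distributed according to a pmf P_{XY} on a finite set 𝒳×𝒴. Then lim_{ε→0} limsup_{n→∞} H_0^ε(X^n|Y^n)/n = H(X|Y), the Shannon conditional entropy of X given Y. -/

import Mathlib

open scoped Classical BigOperators

/-- The conditional smooth max Rényi entropy of order zero,
`H₀^ε(A|B) = min_{Q ∈ B^ε(P_{AB})} log₂ max_{b} |Supp(Q(A|B = b))|`. -/
noncomputable def H0sm {α β : Type*} [Fintype α] [Fintype β]
    (ε : ℝ) (PAB : α × β → ℝ) : ℝ :=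
  sInf {r : ℝ | ∃ Q : α × β → ℝ,
    (∀ p, 0 ≤ Q p ∧ Q p ≤ PAB p) ∧ 1 - ε ≤ ∑ p, Q p ∧
    r = Real.logb 2
      (↑(Finset.univ.sup fun b : β =>
        (Finset.univ.filter fun a : α => 0 < Q (a, b)).card) : ℝ)}

open Finset Real
set_option linter.unusedSectionVars false
set_option linter.unusedVariables false
set_option maxHeartbeats 1000000

namespace AEP

lemma logb_natCast_nonneg (k : ℕ) : 0 ≤ Real.logb 2 (k : ℝ) := by
  rcases Nat.eq_zero_or_pos k with rfl | hk
  · simp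
  · exact Real.logb_nonneg (by norm_num) (by exact_mod_cast hk)

def H0set {α β : Type*} [Fintype α] [Fintype β] (ε : ℝ) (PAB : α × β → ℝ) : Set ℝ :=
  {r : ℝ | ∃ Q : α × β → ℝ,
    (∀ p, 0 ≤ Q p ∧ Q p ≤ PAB p) ∧ 1 - ε ≤ ∑ p, Q p ∧
    r = Real.logb 2
      (↑(Finset.univ.sup fun b : β =>
        (Finset.univ.filter fun a : α => 0 < Q (a, b)).card) : ℝ)}

lemma H0sm_eq {α β : Type*} [Fintype α] [Fintype β] (ε : ℝ) (PAB : α × β → ℝ) :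
    H0sm ε PAB = sInf (H0set ε PAB) := rfl

lemma H0set_bddBelow {α β : Type*} [Fintype α] [Fintype β] (ε : ℝ) (PAB : α × β → ℝ) :
    BddBelow (H0set ε PAB) := by
  refine ⟨0, fun r hr => ?_⟩
  obtain ⟨Q, -, -, rfl⟩ := hr
  exact logb_natCast_nonneg _

lemma H0set_nonempty {α β : Type*} [Fintype α] [Fintype β] {ε : ℝ} (hε : 0 ≤ ε)
    (PAB : α × β → ℝ) (h0 : ∀ p, 0 ≤ PAB p) (h1 : ∑ p, PAB p = 1) :
    (H0set ε PAB).Nonempty := by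
  refine ⟨_, PAB, fun p => ⟨h0 p, le_refl _⟩, ?_, rfl⟩
  · rw [h1]; linarith

lemma H0sm_nonneg {α β : Type*} [Fintype α] [Fintype β] {ε : ℝ} (hε : 0 ≤ ε)
    (PAB : α × β → ℝ) (h0 : ∀ p, 0 ≤ PAB p) (h1 : ∑ p, PAB p = 1) : 0 ≤ H0sm ε PAB := by
  rw [H0sm_eq]
  refine le_csInf (H0set_nonempty hε PAB h0 h1) fun r hr => ?_
  obtain ⟨Q, -, -, rfl⟩ := hr
  exact logb_natCast_nonneg _


variable {X Y : Type*} [Fintype X] [Fintype Y]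

/-- single-letter surprisal -/
noncomputable def ell (PXY : X × Y → ℝ) (PY : Y → ℝ) (p : X × Y) : ℝ :=
  -Real.logb 2 (PXY p / PY p.2)

noncomputable def Hc (PXY : X × Y → ℝ) (PY : Y → ℝ) : ℝ := ∑ p, PXY p * ell PXY PY p

noncomputable def gc (PXY : X × Y → ℝ) (PY : Y → ℝ) (p : X × Y) : ℝ :=
  ell PXY PY p - Hc PXY PY

noncomputable def Vc (PXY : X × Y → ℝ) (PY : Y → ℝ) : ℝ := ∑ p, PXY p * (gc PXY PY p) ^ 2

section Basic
variable (PXY : X × Y → ℝ) (PY : Y → ℝ)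
variable (hP0 : ∀ p, 0 ≤ PXY p) (hP1 : ∑ p, PXY p = 1) (hPY : ∀ y, PY y = ∑ x, PXY (x, y))

include hP0 hPY in
lemma PY_nonneg (y : Y) : 0 ≤ PY y := by
  rw [hPY]; exact Finset.sum_nonneg fun x _ => hP0 _

include hP0 hPY in
lemma PXY_le_PY (p : X × Y) : PXY p ≤ PY p.2 := by
  rw [hPY]
  exact Finset.single_le_sum (fun x _ => hP0 (x, p.2)) (Finset.mem_univ p.1)

include hP1 hPY in
lemma sum_PY : ∑ y, PY y = 1 := by
  simp only [hPY]
  rw [← hP1]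
  exact (Fintype.sum_prod_type_right (f := PXY)).symm

include hP0 hPY in
lemma cnd_nonneg (p : X × Y) : 0 ≤ PXY p / PY p.2 :=
  div_nonneg (hP0 p) (PY_nonneg PXY PY hP0 hPY p.2)

include hP0 hPY in
lemma cnd_le_one (p : X × Y) : PXY p / PY p.2 ≤ 1 := by
  rcases eq_or_lt_of_le (PY_nonneg PXY PY hP0 hPY p.2) with h | h
  · simp [← h]
  · rw [div_le_one h]; exact PXY_le_PY PXY PY hP0 hPY p

include hP0 hPY in
lemma sum_cnd_le_one (y : Y) : ∑ x, PXY (x, y) / PY y ≤ 1 := by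
  rcases eq_or_lt_of_le (PY_nonneg PXY PY hP0 hPY y) with h | h
  · simp [← h]
  · rw [← Finset.sum_div, ← hPY, div_self (ne_of_gt h)]

include hP0 hPY in
lemma ell_nonneg {p : X × Y} (hp : 0 < PXY p) : 0 ≤ ell PXY PY p := by
  have h1 := cnd_le_one PXY PY hP0 hPY p
  have h2 := cnd_nonneg PXY PY hP0 hPY p
  simpa [ell] using Real.logb_nonpos (by norm_num : (1:ℝ) < 2) h2 h1

include hP0 hPY in
lemma Hc_nonneg : 0 ≤ Hc PXY PY := by
  refine Finset.sum_nonneg fun p _ => ?_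
  rcases eq_or_lt_of_le (hP0 p) with h | h
  · simp [← h]
  · exact mul_nonneg h.le (ell_nonneg PXY PY hP0 hPY h)

include hP1 in
lemma sum_gc : ∑ p, PXY p * gc PXY PY p = 0 := by
  simp only [gc, mul_sub, Finset.sum_sub_distrib, ← Finset.sum_mul, hP1, Hc]
  ring

include hP0 in
lemma Vc_nonneg : 0 ≤ Vc PXY PY :=
  Finset.sum_nonneg fun p _ => mul_nonneg (hP0 p) (sq_nonneg _)

end Basic

/-- sum of products of independent factors factorizes -/
lemma sum_fn {γ : Type*} [Fintype γ] (n : ℕ) (f : Fin n → γ → ℝ) :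
    ∑ σ : Fin n → γ, ∏ i, f i (σ i) = ∏ i, ∑ g, f i g :=
  (Fintype.prod_sum f).symm


section Moments
variable (PXY : X × Y → ℝ)
variable (hP0 : ∀ p, 0 ≤ PXY p) (hP1 : ∑ p, PXY p = 1)

include hP1 in
lemma sum_W_eq_one (n : ℕ) : ∑ σ : Fin n → X × Y, ∏ i, PXY (σ i) = 1 := by
  rw [sum_fn n fun _ p => PXY p]
  simp [hP1]

include hP1 in
lemma second_moment (n : ℕ) (g : X × Y → ℝ) (hg : ∑ p, PXY p * g p = 0) :
    ∑ σ : Fin n → X × Y, (∏ i, PXY (σ i)) * (∑ i, g (σ i)) ^ 2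
      = n * ∑ p, PXY p * g p ^ 2 := by
  have key : ∀ i j : Fin n,
      ∑ σ : Fin n → X × Y, (∏ k, PXY (σ k)) * (g (σ i) * g (σ j))
        = if i = j then ∑ p, PXY p * g p ^ 2 else 0 := by
    intro i j
    have hfac : ∀ σ : Fin n → X × Y,
        (∏ k, PXY (σ k)) * (g (σ i) * g (σ j))
          = ∏ k, (PXY (σ k) * ((if i = k then g (σ k) else 1) *
              (if j = k then g (σ k) else 1))) := by
      intro σ
      rw [Finset.prod_mul_distrib, Finset.prod_mul_distrib,
        Finset.prod_ite_eq, Finset.prod_ite_eq]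
      simp
    simp only [hfac]
    rw [sum_fn n fun k p => PXY p * ((if i = k then g p else 1) * (if j = k then g p else 1))]
    rcases eq_or_ne i j with rfl | hij
    · have hk : ∀ k : Fin n, (∑ p, PXY p * ((if i = k then g p else 1) * (if i = k then g p else 1)))
          = if i = k then ∑ p, PXY p * g p ^ 2 else 1 := by
        intro k
        rcases eq_or_ne i k with rfl | h
        · simp [sq]
        · simp [h, hP1]
      rw [Finset.prod_congr rfl fun k _ => hk k, Finset.prod_ite_eq]
      simp
    · rw [if_neg hij]
      apply Finset.prod_eq_zero (Finset.mem_univ i)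
      simp only [if_pos rfl, if_neg (Ne.symm hij)]
      simpa using hg
  calc ∑ σ : Fin n → X × Y, (∏ i, PXY (σ i)) * (∑ i, g (σ i)) ^ 2
      = ∑ σ : Fin n → X × Y, ∑ i, ∑ j, (∏ k, PXY (σ k)) * (g (σ i) * g (σ j)) := by
        refine Finset.sum_congr rfl fun σ _ => ?_
        rw [sq, Finset.sum_mul_sum, Finset.mul_sum]
        exact Finset.sum_congr rfl fun i _ => by rw [Finset.mul_sum]
    _ = ∑ i, ∑ j, ∑ σ : Fin n → X × Y, (∏ k, PXY (σ k)) * (g (σ i) * g (σ j)) := by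
        rw [Finset.sum_comm]
        exact Finset.sum_congr rfl fun i _ => Finset.sum_comm
    _ = ∑ i : Fin n, ∑ j : Fin n, if i = j then ∑ p, PXY p * g p ^ 2 else 0 := by
        exact Finset.sum_congr rfl fun i _ => Finset.sum_congr rfl fun j _ => key i j
    _ = n * ∑ p, PXY p * g p ^ 2 := by
        simp [Finset.sum_ite_eq]

include hP0 hP1 in
lemma chebyshev (n : ℕ) (hn : 0 < n) (g : X × Y → ℝ) (hg : ∑ p, PXY p * g p = 0)
    (δ : ℝ) (hδ : 0 < δ) :
    ∑ σ ∈ Finset.univ.filter (fun σ : Fin n → X × Y => ¬ |∑ i, g (σ i)| ≤ n * δ),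
        ∏ i, PXY (σ i) ≤ (∑ p, PXY p * g p ^ 2) / (n * δ ^ 2) := by
  set V := ∑ p, PXY p * g p ^ 2 with hV
  set B := Finset.univ.filter (fun σ : Fin n → X × Y => ¬ |∑ i, g (σ i)| ≤ n * δ) with hB
  have hn' : (0:ℝ) < n := by exact_mod_cast hn
  have h1 : (n * δ) ^ 2 * ∑ σ ∈ B, ∏ i, PXY (σ i) ≤ n * V := by
    rw [← second_moment PXY hP1 n g hg]
    calc ((n:ℝ) * δ) ^ 2 * ∑ σ ∈ B, ∏ i, PXY (σ i)
        = ∑ σ ∈ B, (n * δ) ^ 2 * ∏ i, PXY (σ i) := Finset.mul_sum _ _ _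
      _ ≤ ∑ σ ∈ B, (∏ i, PXY (σ i)) * (∑ i, g (σ i)) ^ 2 := by
          refine Finset.sum_le_sum fun σ hσ => ?_
          rw [hB, Finset.mem_filter] at hσ
          have habs : (n:ℝ) * δ ≤ |∑ i, g (σ i)| := le_of_not_ge hσ.2
          have hW : 0 ≤ ∏ i, PXY (σ i) := Finset.prod_nonneg fun i _ => hP0 _
          have hsq : ((n:ℝ) * δ) ^ 2 ≤ (∑ i, g (σ i)) ^ 2 := by
            rw [← sq_abs (∑ i, g (σ i))]
            exact pow_le_pow_left₀ (by positivity) habs 2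
          nlinarith
      _ ≤ ∑ σ : Fin n → X × Y, (∏ i, PXY (σ i)) * (∑ i, g (σ i)) ^ 2 := by
          refine Finset.sum_le_sum_of_subset_of_nonneg (Finset.filter_subset _ _)
            fun σ _ _ => mul_nonneg (Finset.prod_nonneg fun i _ => hP0 _) (sq_nonneg _)
  rw [le_div_iff₀ (by positivity : (0:ℝ) < n * δ ^ 2)]
  have h3 : (n:ℝ) * ((∑ σ ∈ B, ∏ i, PXY (σ i)) * (n * δ ^ 2)) ≤ n * V := by
    calc (n:ℝ) * ((∑ σ ∈ B, ∏ i, PXY (σ i)) * (n * δ ^ 2))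
        = (n * δ) ^ 2 * ∑ σ ∈ B, ∏ i, PXY (σ i) := by ring
      _ ≤ n * V := h1
  exact le_of_mul_le_mul_left h3 hn'


end Moments

lemma sum_transport (n : ℕ) (F : (Fin n → X × Y) → ℝ) :
    ∑ p : (Fin n → X) × (Fin n → Y), F (fun i => (p.1 i, p.2 i)) = ∑ σ, F σ :=
  Fintype.sum_equiv (Equiv.arrowProdEquivProdArrow (Fin n) (fun _ => X) (fun _ => Y)).symm _ _ (fun p => rfl)



section Main
variable (PXY : X × Y → ℝ) (PY : Y → ℝ)
variable (hP0 : ∀ p, 0 ≤ PXY p) (hP1 : ∑ p, PXY p = 1) (hPY : ∀ y, PY y = ∑ x, PXY (x, y))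

include hP0 in
lemma factors_pos {n : ℕ} {σ : Fin n → X × Y} (h : 0 < ∏ i, PXY (σ i)) (i : Fin n) :
    0 < PXY (σ i) := by
  rcases eq_or_lt_of_le (hP0 (σ i)) with he | hl
  · exfalso
    rw [Finset.prod_eq_zero (Finset.mem_univ i) he.symm] at h
    exact lt_irrefl _ h
  · exact hl

include hP0 hPY in
lemma prod_cnd_eq {n : ℕ} {σ : Fin n → X × Y} (h : ∀ i, 0 < PXY (σ i)) :
    ∏ i, PXY (σ i) / PY (σ i).2 = (2:ℝ) ^ (-(∑ i, ell PXY PY (σ i))) := by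
  have hcnd : ∀ i : Fin n, 0 < PXY (σ i) / PY (σ i).2 := by
    intro i
    apply div_pos (h i)
    exact lt_of_lt_of_le (h i) (PXY_le_PY PXY PY hP0 hPY (σ i))
  have : ∀ i : Fin n, PXY (σ i) / PY (σ i).2
      = (2:ℝ) ^ (Real.logb 2 (PXY (σ i) / PY (σ i).2)) := by
    intro i
    rw [Real.rpow_logb (by norm_num) (by norm_num) (hcnd i)]
  rw [Finset.prod_congr rfl fun i _ => this i,
    ← Real.rpow_sum_of_pos (by norm_num : (0:ℝ) < 2)]
  congr 1
  simp [ell, Finset.sum_neg_distrib]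

include hP0 in
lemma sum_ell_eq {n : ℕ} (σ : Fin n → X × Y) :
    ∑ i, ell PXY PY (σ i) = (∑ i, gc PXY PY (σ i)) + n * Hc PXY PY := by
  simp only [gc, Finset.sum_sub_distrib, Finset.sum_const, Finset.card_univ,
    Fintype.card_fin, nsmul_eq_mul]
  ring

include hP0 hP1 hPY in
lemma achievability {ε δ : ℝ} (hε : 0 < ε) (hδ : 0 < δ) (n : ℕ) (hn : 0 < n)
    (hV : Vc PXY PY / (n * δ ^ 2) ≤ ε) :
    H0sm ε (fun p : (Fin n → X) × (Fin n → Y) => ∏ i, PXY (p.1 i, p.2 i))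
      ≤ n * (Hc PXY PY + δ) := by
  classical
  set H := Hc PXY PY with hH
  set T : Finset (Fin n → X × Y) :=
    Finset.univ.filter (fun σ => |∑ i, gc PXY PY (σ i)| ≤ n * δ) with hT
  set Q : (Fin n → X) × (Fin n → Y) → ℝ :=
    fun p => if (fun i => (p.1 i, p.2 i)) ∈ T then ∏ i, PXY (p.1 i, p.2 i) else 0 with hQ
  -- membership conditions
  have hcond1 : ∀ p, 0 ≤ Q p ∧ Q p ≤ ∏ i, PXY (p.1 i, p.2 i) := by
    intro p
    rw [hQ]
    by_cases hmem : (fun i => (p.1 i, p.2 i)) ∈ T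
    · simp only [if_pos hmem]
      exact ⟨Finset.prod_nonneg fun i _ => hP0 _, le_refl _⟩
    · simp only [if_neg hmem]
      exact ⟨le_refl _, Finset.prod_nonneg fun i _ => hP0 _⟩
  have hcond2 : 1 - ε ≤ ∑ p, Q p := by
    have htr : ∑ p, Q p = ∑ σ : Fin n → X × Y,
        (if σ ∈ T then ∏ i, PXY (σ i) else 0) :=
      sum_transport n (fun σ => if σ ∈ T then ∏ i, PXY (σ i) else 0)
    rw [htr, Finset.sum_ite_mem, Finset.univ_inter]
    have hsplit : (∑ σ ∈ T, ∏ i, PXY (σ i)) +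
        ∑ σ ∈ Finset.univ.filter (fun σ : Fin n → X × Y => ¬ |∑ i, gc PXY PY (σ i)| ≤ n * δ),
          ∏ i, PXY (σ i) = 1 := by
      rw [hT, Finset.sum_filter_add_sum_filter_not]
      exact sum_W_eq_one PXY hP1 n
    have hbad := (chebyshev PXY hP0 hP1 n hn (gc PXY PY)
      (sum_gc PXY PY hP1) δ hδ).trans hV
    linarith
  have hmem : Real.logb 2
      (↑(Finset.univ.sup fun b : Fin n → Y =>
        (Finset.univ.filter fun a : Fin n → X => 0 < Q (a, b)).card) : ℝ)
      ∈ H0set ε (fun p : (Fin n → X) × (Fin n → Y) => ∏ i, PXY (p.1 i, p.2 i)) :=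
    ⟨Q, hcond1, hcond2, rfl⟩
  refine le_trans (csInf_le (H0set_bddBelow _ _) hmem) ?_
  -- bound the support size
  have hXYne : Nonempty (X × Y) := by
    by_contra h
    rw [not_nonempty_iff] at h
    rw [Finset.univ_eq_empty, Finset.sum_empty] at hP1
    norm_num at hP1
  have hYne : Nonempty Y := ⟨(Classical.arbitrary (X × Y)).2⟩
  have hXne : Nonempty X := ⟨(Classical.arbitrary (X × Y)).1⟩
  obtain ⟨y0, -, hy0⟩ := Finset.exists_mem_eq_sup (Finset.univ : Finset (Fin n → Y))
    Finset.univ_nonempty (fun b => (Finset.univ.filter fun a : Fin n → X => 0 < Q (a, b)).card)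
  rw [hy0]
  set F0 := Finset.univ.filter (fun a : Fin n → X => 0 < Q (a, y0)) with hF0
  set M : ℝ := n * (H + δ) with hM
  have hM0 : 0 ≤ M := by
    have := Hc_nonneg PXY PY hP0 hPY
    rw [hM]
    positivity
  -- each typical positive sequence has conditional probability ≥ 2^(-M)
  have hlow : ∀ x ∈ F0, (2:ℝ) ^ (-M) ≤ ∏ i, PXY (x i, y0 i) / PY (y0 i) := by
    intro x hx
    rw [hF0, Finset.mem_filter] at hx
    have hQpos := hx.2
    rw [hQ] at hQpos
    by_cases hmem2 : (fun i => ((x i : X), (y0 i : Y))) ∈ T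
    swap
    · simp only [if_neg hmem2] at hQpos; exact absurd hQpos (lt_irrefl 0)
    simp only [if_pos hmem2] at hQpos
    have hposf : ∀ i, 0 < PXY (x i, y0 i) :=
      factors_pos PXY hP0 (σ := fun i => (x i, y0 i)) hQpos
    have heq := prod_cnd_eq PXY PY hP0 hPY (σ := fun i => (x i, y0 i)) hposf
    simp only at heq
    rw [heq]
    rw [Real.rpow_le_rpow_left_iff (by norm_num : (1:ℝ) < 2), neg_le_neg_iff]
    rw [sum_ell_eq PXY PY hP0]
    rw [hT, Finset.mem_filter] at hmem2
    have habs := (abs_le.mp hmem2.2).2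
    rw [hM, hH]
    linarith
  -- the total conditional mass is at most one
  have hup : ∑ x : Fin n → X, ∏ i, PXY (x i, y0 i) / PY (y0 i) ≤ 1 := by
    rw [sum_fn n (fun i x => PXY (x, y0 i) / PY (y0 i))]
    refine Finset.prod_le_one (fun i _ => ?_) (fun i _ => ?_)
    · exact Finset.sum_nonneg fun x _ =>
        div_nonneg (hP0 _) (PY_nonneg PXY PY hP0 hPY _)
    · exact sum_cnd_le_one PXY PY hP0 hPY (y0 i)
  have hcard : (F0.card : ℝ) * (2:ℝ) ^ (-M) ≤ 1 := by
    calc (F0.card : ℝ) * (2:ℝ) ^ (-M) = ∑ _x ∈ F0, (2:ℝ) ^ (-M) := by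
          rw [Finset.sum_const, nsmul_eq_mul]
      _ ≤ ∑ x ∈ F0, ∏ i, PXY (x i, y0 i) / PY (y0 i) := Finset.sum_le_sum hlow
      _ ≤ ∑ x : Fin n → X, ∏ i, PXY (x i, y0 i) / PY (y0 i) := by
          refine Finset.sum_le_sum_of_subset_of_nonneg (Finset.subset_univ _)
            fun x _ _ => Finset.prod_nonneg fun i _ =>
              div_nonneg (hP0 _) (PY_nonneg PXY PY hP0 hPY _)
      _ ≤ 1 := hup
  have hcard2 : (F0.card : ℝ) ≤ (2:ℝ) ^ M := by
    have h2pos : (0:ℝ) < (2:ℝ) ^ (-M) := Real.rpow_pos_of_pos (by norm_num) _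
    rw [← le_div_iff₀ h2pos] at hcard
    calc (F0.card : ℝ) ≤ 1 / (2:ℝ) ^ (-M) := hcard
      _ = (2:ℝ) ^ M := by
          rw [Real.rpow_neg (by norm_num : (0:ℝ) ≤ 2), one_div, inv_inv]
  rcases Nat.eq_zero_or_pos F0.card with h0 | hpos
  · rw [h0]
    simpa using hM0
  · calc Real.logb 2 (F0.card : ℝ) ≤ Real.logb 2 ((2:ℝ) ^ M) :=
          Real.logb_le_logb_of_le (by norm_num) (by exact_mod_cast hpos) hcard2
      _ = M := Real.logb_rpow (by norm_num) (by norm_num)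

include hP0 hP1 hPY in
lemma converse {ε δ : ℝ} (hε0 : 0 ≤ ε) (hε : ε ≤ 1/2) (hδ : 0 < δ)
    (n : ℕ) (hn : 0 < n) (hV : Vc PXY PY / (n * δ ^ 2) ≤ 1/4) :
    n * (Hc PXY PY - δ) - 2
      ≤ H0sm ε (fun p : (Fin n → X) × (Fin n → Y) => ∏ i, PXY (p.1 i, p.2 i)) := by
  classical
  set H := Hc PXY PY with hH
  set t : ℝ := (2:ℝ) ^ (-(n * (H - δ))) with ht
  have htpos : 0 < t := Real.rpow_pos_of_pos (by norm_num) _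
  set T : Finset (Fin n → X × Y) :=
    Finset.univ.filter (fun σ => |∑ i, gc PXY PY (σ i)| ≤ n * δ) with hT
  have hWsum : ∑ p : (Fin n → X) × (Fin n → Y), ∏ i, PXY (p.1 i, p.2 i) = 1 := by
    rw [sum_transport n (fun σ => ∏ i, PXY (σ i))]
    exact sum_W_eq_one PXY hP1 n
  rw [H0sm_eq]
  refine le_csInf (H0set_nonempty hε0 _
    (fun p => Finset.prod_nonneg fun i _ => hP0 _) hWsum) ?_
  rintro r ⟨Q, hQle, hQsum, rfl⟩
  set K := Finset.univ.sup (fun b : Fin n → Y =>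
    (Finset.univ.filter fun a : Fin n → X => 0 < Q (a, b)).card) with hKdef
  -- split the mass of Q into typical and atypical parts
  have hsplit : ∑ p, Q p
      = (∑ p : (Fin n → X) × (Fin n → Y),
          (if (fun i => (p.1 i, p.2 i)) ∈ T then Q p else 0))
        + ∑ p : (Fin n → X) × (Fin n → Y),
          (if (fun i => (p.1 i, p.2 i)) ∈ T then 0 else Q p) := by
    rw [← Finset.sum_add_distrib]
    refine Finset.sum_congr rfl fun p _ => ?_
    by_cases h : (fun i => (p.1 i, p.2 i)) ∈ T <;> simp [h]
  -- atypical part is small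
  have hatyp : ∑ p : (Fin n → X) × (Fin n → Y),
      (if (fun i => (p.1 i, p.2 i)) ∈ T then 0 else Q p) ≤ Vc PXY PY / (n * δ ^ 2) := by
    have hle1 : ∑ p : (Fin n → X) × (Fin n → Y),
        (if (fun i => (p.1 i, p.2 i)) ∈ T then 0 else Q p)
        ≤ ∑ p : (Fin n → X) × (Fin n → Y),
          (if (fun i => (p.1 i, p.2 i)) ∈ T then 0 else ∏ i, PXY (p.1 i, p.2 i)) := by
      refine Finset.sum_le_sum fun p _ => ?_
      by_cases h : (fun i => (p.1 i, p.2 i)) ∈ T <;> simp [h, (hQle p).2]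
    refine hle1.trans ?_
    rw [sum_transport n (fun σ => if σ ∈ T then 0 else ∏ i, PXY (σ i))]
    have : ∑ σ : Fin n → X × Y, (if σ ∈ T then 0 else ∏ i, PXY (σ i))
        = ∑ σ ∈ Finset.univ.filter
            (fun σ : Fin n → X × Y => ¬ |∑ i, gc PXY PY (σ i)| ≤ n * δ),
          ∏ i, PXY (σ i) := by
      rw [Finset.sum_filter]
      refine Finset.sum_congr rfl fun σ _ => ?_
      by_cases h : |∑ i, gc PXY PY (σ i)| ≤ n * δ <;> simp [hT, h]
    rw [this]
    exact chebyshev PXY hP0 hP1 n hn (gc PXY PY) (sum_gc PXY PY hP1) δ hδ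
  -- typical part is at most K * t
  have htyp : ∑ p : (Fin n → X) × (Fin n → Y),
      (if (fun i => (p.1 i, p.2 i)) ∈ T then Q p else 0) ≤ K * t := by
    rw [Fintype.sum_prod_type_right]
    have hsum1y : ∑ y : Fin n → Y, ∏ i, PY (y i) = 1 := by
      rw [sum_fn n (fun _ y => PY y)]
      simp [sum_PY PXY PY hP1 hPY]
    calc ∑ y : Fin n → Y, ∑ x : Fin n → X,
          (if (fun i => (x i, y i)) ∈ T then Q (x, y) else 0)
        ≤ ∑ y : Fin n → Y, (K : ℝ) * ((∏ i, PY (y i)) * t) := by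
          refine Finset.sum_le_sum fun y _ => ?_
          have hPYn : 0 ≤ ∏ i, PY (y i) :=
            Finset.prod_nonneg fun i _ => PY_nonneg PXY PY hP0 hPY _
          have hterm : ∀ x : Fin n → X,
              (if (fun i => (x i, y i)) ∈ T then Q (x, y) else 0)
              ≤ (if 0 < Q (x, y) then (∏ i, PY (y i)) * t else 0) := by
            intro x
            by_cases hqx : 0 < Q (x, y)
            swap
            · have hq0 : Q (x, y) = 0 := le_antisymm (not_lt.mp hqx) (hQle (x, y)).1
              simp [hq0, hqx]
            rw [if_pos hqx]
            by_cases hmem : (fun i => (x i, y i)) ∈ T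
            swap
            · rw [if_neg hmem]; positivity
            rw [if_pos hmem]
            -- Q ≤ W = PYn * prod cnd ≤ PYn * t
            have hQW := (hQle (x, y)).2
            simp only at hQW
            have hWpos : 0 < ∏ i, PXY (x i, y i) := lt_of_lt_of_le hqx hQW
            have hposf : ∀ i, 0 < PXY (x i, y i) :=
              factors_pos PXY hP0 (σ := fun i => (x i, y i)) hWpos
            have hPYpos : ∀ i, 0 < PY (y i) := fun i =>
              lt_of_lt_of_le (hposf i) (PXY_le_PY PXY PY hP0 hPY (x i, y i))
            have hfac : ∏ i, PXY (x i, y i)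
                = (∏ i, PY (y i)) * ∏ i, PXY (x i, y i) / PY (y i) := by
              rw [← Finset.prod_mul_distrib]
              refine Finset.prod_congr rfl fun i _ => ?_
              rw [mul_comm, div_mul_cancel₀ _ (ne_of_gt (hPYpos i))]
            have hcnd : ∏ i, PXY (x i, y i) / PY (y i) ≤ t := by
              have heq := prod_cnd_eq PXY PY hP0 hPY (σ := fun i => (x i, y i)) hposf
              simp only at heq
              rw [heq, ht, Real.rpow_le_rpow_left_iff (by norm_num : (1:ℝ) < 2),
                neg_le_neg_iff, sum_ell_eq PXY PY hP0]
              rw [hT, Finset.mem_filter] at hmem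
              have habs := (abs_le.mp hmem.2).1
              rw [hH]
              linarith
            calc Q (x, y) ≤ ∏ i, PXY (x i, y i) := hQW
              _ = (∏ i, PY (y i)) * ∏ i, PXY (x i, y i) / PY (y i) := hfac
              _ ≤ (∏ i, PY (y i)) * t := by
                  exact mul_le_mul_of_nonneg_left hcnd hPYn
          calc ∑ x : Fin n → X, (if (fun i => (x i, y i)) ∈ T then Q (x, y) else 0)
              ≤ ∑ x : Fin n → X, (if 0 < Q (x, y) then (∏ i, PY (y i)) * t else 0) :=
                Finset.sum_le_sum fun x _ => hterm x
            _ = ((Finset.univ.filter fun x : Fin n → X => 0 < Q (x, y)).card : ℝ)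
                  * ((∏ i, PY (y i)) * t) := by
                rw [← Finset.sum_filter, Finset.sum_const, nsmul_eq_mul]
            _ ≤ (K : ℝ) * ((∏ i, PY (y i)) * t) := by
                refine mul_le_mul_of_nonneg_right ?_ (by positivity)
                exact_mod_cast Finset.le_sup (f := fun b : Fin n → Y =>
                  (Finset.univ.filter fun a : Fin n → X => 0 < Q (a, b)).card)
                  (Finset.mem_univ y)
      _ = (K : ℝ) * t := by
          rw [← Finset.mul_sum, ← Finset.sum_mul, hsum1y, one_mul]
  -- combine the bounds
  have hmass : 1 - ε ≤ Vc PXY PY / (n * δ ^ 2) + K * t := by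
    rw [hsplit] at hQsum
    linarith
  have hKt : (1/4 : ℝ) ≤ (K : ℝ) * t := by linarith
  set a : ℝ := n * (H - δ) with ha
  have hinv : (1:ℝ) / t = (2:ℝ) ^ a := by
    rw [ht, Real.rpow_neg (by norm_num : (0:ℝ) ≤ 2), one_div, inv_inv]
  have hK4 : (2:ℝ) ^ a / 4 ≤ (K : ℝ) := by
    have h1 : (1/4 : ℝ) / t ≤ (K : ℝ) := by
      rw [div_le_iff₀ htpos]; linarith
    calc (2:ℝ) ^ a / 4 = (1/4) * ((1:ℝ)/t) := by rw [hinv]; ring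
      _ = (1/4 : ℝ) / t := by ring
      _ ≤ (K : ℝ) := h1
  have h22 : (2:ℝ) ^ (2:ℝ) = 4 := by
    rw [show (2:ℝ) = ((2:ℕ):ℝ) from by norm_num, Real.rpow_natCast]
    norm_num
  have ha2 : (2:ℝ) ^ (a - 2) = (2:ℝ) ^ a / 4 := by
    rw [Real.rpow_sub (by norm_num : (0:ℝ) < 2), h22]
  have hfinal : (2:ℝ) ^ (a - 2) ≤ (K : ℝ) := ha2 ▸ hK4
  calc (n:ℝ) * (Hc PXY PY - δ) - 2 = a - 2 := by rw [ha, hH]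
    _ = Real.logb 2 ((2:ℝ) ^ (a - 2)) :=
        (Real.logb_rpow (by norm_num) (by norm_num)).symm
    _ ≤ Real.logb 2 (K : ℝ) :=
        Real.logb_le_logb_of_le (by norm_num)
          (Real.rpow_pos_of_pos (by norm_num) _) hfinal

include hP0 hP1 hPY in
lemma limsup_eq {ε : ℝ} (hε0 : 0 < ε) (hε : ε < 1/2) :
    Filter.limsup
      (fun n =>
        H0sm ε (fun p : (Fin (n + 1) → X) × (Fin (n + 1) → Y) =>
          ∏ i, PXY (p.1 i, p.2 i)) / (n + 1))
      Filter.atTop = Hc PXY PY := by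
  classical
  set H := Hc PXY PY with hH
  set V := Vc PXY PY with hVdef
  have hV0 : 0 ≤ V := Vc_nonneg PXY PY hP0
  set f : ℕ → ℝ := fun n =>
    H0sm ε (fun p : (Fin (n + 1) → X) × (Fin (n + 1) → Y) =>
      ∏ i, PXY (p.1 i, p.2 i)) / (n + 1) with hf
  have hWsum : ∀ n : ℕ, ∑ p : (Fin (n + 1) → X) × (Fin (n + 1) → Y),
      ∏ i, PXY (p.1 i, p.2 i) = 1 := by
    intro n
    rw [sum_transport (n + 1) (fun σ => ∏ i, PXY (σ i))]
    exact sum_W_eq_one PXY hP1 (n + 1)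
  have hf0 : ∀ n, 0 ≤ f n := by
    intro n
    refine div_nonneg ?_ (by positivity)
    exact H0sm_nonneg hε0.le _ (fun p => Finset.prod_nonneg fun i _ => hP0 _) (hWsum n)
  have hupper : ∀ δ : ℝ, 0 < δ → ∀ᶠ n in Filter.atTop, f n ≤ H + δ := by
    intro δ hδ
    obtain ⟨N, hN⟩ := exists_nat_ge (V / (ε * δ ^ 2))
    filter_upwards [Filter.eventually_ge_atTop N] with n hn
    have hcast : (N : ℝ) ≤ (n : ℝ) + 1 := by
      have : (N : ℝ) ≤ (n : ℝ) := by exact_mod_cast hn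
      linarith
    have hVn : V / (((n : ℝ) + 1) * δ ^ 2) ≤ ε := by
      rw [div_le_iff₀ (by positivity)]
      have h1 : V ≤ ε * δ ^ 2 * N := by
        have := (div_le_iff₀ (by positivity : (0:ℝ) < ε * δ ^ 2)).mp hN
        linarith
      have h2 : ε * δ ^ 2 * (N : ℝ) ≤ ε * δ ^ 2 * ((n : ℝ) + 1) :=
        mul_le_mul_of_nonneg_left hcast (by positivity)
      calc V ≤ ε * δ ^ 2 * ((n : ℝ) + 1) := h1.trans h2
        _ = ε * (((n : ℝ) + 1) * δ ^ 2) := by ring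
    have hach := achievability PXY PY hP0 hP1 hPY hε0 hδ (n + 1) (Nat.succ_pos n)
      (by push_cast; exact hVn)
    rw [hf]
    rw [div_le_iff₀ (by positivity : (0:ℝ) < (n : ℝ) + 1)]
    calc H0sm ε (fun p : (Fin (n + 1) → X) × (Fin (n + 1) → Y) =>
          ∏ i, PXY (p.1 i, p.2 i)) ≤ ((n + 1 : ℕ) : ℝ) * (H + δ) := hach
      _ = (H + δ) * ((n : ℝ) + 1) := by push_cast; ring
  have hbdd : Filter.IsBoundedUnder (· ≤ ·) Filter.atTop f :=
    ⟨H + 1, Filter.eventually_map.mpr (hupper 1 one_pos)⟩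
  have hcob : Filter.IsCoboundedUnder (· ≤ ·) Filter.atTop f :=
    Filter.isCoboundedUnder_le_of_le Filter.atTop hf0
  have hlimsup_le : Filter.limsup f Filter.atTop ≤ H := by
    refine le_of_forall_pos_le_add fun δ hδ => ?_
    exact Filter.limsup_le_of_le hcob (hupper δ hδ)
  have hlower : ∀ δ : ℝ, 0 < δ → ∀ᶠ n in Filter.atTop, H - 2 * δ ≤ f n := by
    intro δ hδ
    obtain ⟨N1, hN1⟩ := exists_nat_ge (4 * V / δ ^ 2)
    obtain ⟨N2, hN2⟩ := exists_nat_ge (2 / δ)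
    filter_upwards [Filter.eventually_ge_atTop N1, Filter.eventually_ge_atTop N2]
      with n hn1 hn2
    have hc1 : (N1 : ℝ) ≤ (n : ℝ) + 1 := by
      have : (N1 : ℝ) ≤ (n : ℝ) := by exact_mod_cast hn1
      linarith
    have hc2 : (N2 : ℝ) ≤ (n : ℝ) + 1 := by
      have : (N2 : ℝ) ≤ (n : ℝ) := by exact_mod_cast hn2
      linarith
    have hVn : V / (((n : ℝ) + 1) * δ ^ 2) ≤ 1 / 4 := by
      rw [div_le_iff₀ (by positivity)]
      have h1 : 4 * V ≤ δ ^ 2 * N1 := by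
        have := (div_le_iff₀ (by positivity : (0:ℝ) < δ ^ 2)).mp hN1
        linarith
      have h2 : δ ^ 2 * (N1 : ℝ) ≤ δ ^ 2 * ((n : ℝ) + 1) :=
        mul_le_mul_of_nonneg_left hc1 (by positivity)
      linarith
    have hconv := converse PXY PY hP0 hP1 hPY hε0.le hε.le hδ (n + 1) (Nat.succ_pos n)
      (by push_cast; exact hVn)
    have hdiv : 2 / ((n : ℝ) + 1) ≤ δ := by
      rw [div_le_iff₀ (by positivity : (0:ℝ) < (n : ℝ) + 1)]
      have h3 := (div_le_iff₀ hδ).mp hN2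
      have h4 : (N2 : ℝ) * δ ≤ ((n : ℝ) + 1) * δ :=
        mul_le_mul_of_nonneg_right hc2 hδ.le
      linarith
    rw [hf]
    rw [le_div_iff₀ (by positivity : (0:ℝ) < (n : ℝ) + 1)]
    have hconv' : ((n : ℝ) + 1) * (H - δ) - 2
        ≤ H0sm ε (fun p : (Fin (n + 1) → X) × (Fin (n + 1) → Y) =>
            ∏ i, PXY (p.1 i, p.2 i)) := by
      have := hconv
      push_cast at this
      linarith
    have hd2 : 2 ≤ δ * ((n : ℝ) + 1) := by
      have := (div_le_iff₀ (by positivity : (0:ℝ) < (n : ℝ) + 1)).mp hdiv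
      linarith
    nlinarith [hconv', hd2]
  have hle_limsup : H ≤ Filter.limsup f Filter.atTop := by
    refine le_of_forall_pos_le_add fun δ hδ => ?_
    have h2 := Filter.le_limsup_of_frequently_le
      ((hlower (δ / 2) (by linarith)).frequently) hbdd
    linarith
  exact le_antisymm hlimsup_le hle_limsup

include hP1 in
lemma Hc_eq :
    Hc PXY PY = -∑ p : X × Y, PXY p * Real.logb 2 (PXY p / PY p.2) := by
  simp [Hc, ell, mul_neg, Finset.sum_neg_distrib]

end Main

end AEP

/-- for i.i.d. pairs `(X_i, Y_i) ~ P_{XY}`,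
`lim_{ε→0⁺} limsup_n H₀^ε(X^n|Y^n)/n = H(X|Y)`, the Shannon conditional entropy
`H(X|Y) = −∑_{x,y} P_{XY}(x,y) log₂ P_{X|Y}(x|y)`. -/
theorem smooth_conditional_entropy_rate_iid_eq_shannon
    {X Y : Type*} [Fintype X] [Fintype Y]
    (PXY : X × Y → ℝ)
    (hP0 : ∀ p, 0 ≤ PXY p) (hP1 : ∑ p, PXY p = 1)
    (PY : Y → ℝ) (hPY : ∀ y, PY y = ∑ x, PXY (x, y)) :
    Filter.Tendsto
      (fun ε : ℝ =>
        Filter.limsup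
          (fun n =>
            H0sm ε (fun p : (Fin (n + 1) → X) × (Fin (n + 1) → Y) =>
              ∏ i, PXY (p.1 i, p.2 i)) / (n + 1))
          Filter.atTop)
      (nhdsWithin 0 (Set.Ioi 0))
      (nhds (-∑ p : X × Y, PXY p * Real.logb 2 (PXY p / PY p.2))) := by
  have key : ∀ ε ∈ Set.Ioo (0:ℝ) (1/2),
      Filter.limsup
        (fun n =>
          H0sm ε (fun p : (Fin (n + 1) → X) × (Fin (n + 1) → Y) =>
            ∏ i, PXY (p.1 i, p.2 i)) / (n + 1))
        Filter.atTop
      = -∑ p : X × Y, PXY p * Real.logb 2 (PXY p / PY p.2) := by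
    intro ε hε
    rw [← AEP.Hc_eq PXY PY hP1]
    exact AEP.limsup_eq PXY PY hP0 hP1 hPY hε.1 hε.2
  have hmem : Set.Ioo (0:ℝ) (1/2) ∈ nhdsWithin (0:ℝ) (Set.Ioi 0) :=
    Ioo_mem_nhdsGT_of_mem ⟨le_refl 0, by norm_num⟩
  refine Filter.Tendsto.congr' ?_ tendsto_const_nhds
  exact Filter.eventuallyEq_of_mem hmem fun ε hε => (key ε hε).symm
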